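/- arXiv:2011.03335 — 4 statements merged into one kernel-verified Lean document; each statement's English description precedes it below -/
import Mathlib

section
/- Every quasiopen set Q ⊆ ℝⁿ can be written as Q = U ∪ Z where U is open and Z is a quasivariety. -/
open MeasureTheory Set

/-- `Z ⊆ ℝⁿ` is a quasivariety (w.r.t. the clone `Basic`): it is contained in a
countable union of zero sets of not-identically-zero basic functions. -/
def IsQuasivariety (Basic : ∀ n : ℕ, ((Fin n → ℝ) → ℝ) → Prop) (n : ℕ)
    (Z : Set (Fin n → ℝ)) : Prop :=
  ∃ S : Set ((Fin n → ℝ) → ℝ), S.Countable ∧ (∀ h ∈ S, Basic n h ∧ h ≠ 0) ∧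
    Z ⊆ ⋃ h ∈ S, h ⁻¹' {0}

/-- The clone `Basic` is admissible: every not-identically-zero basic function has
zero set of Lebesgue measure zero. -/
def Admissible (Basic : ∀ n : ℕ, ((Fin n → ℝ) → ℝ) → Prop) : Prop :=
  ∀ (n : ℕ) (h : (Fin n → ℝ) → ℝ), Basic n h → h ≠ 0 → volume (h ⁻¹' {0}) = 0

/-- Quasiopen sets of ℝⁿ: smallest class containing open sets and zero sets of basic
functions, closed under countable unions and binary intersections. -/
inductive QuasiOpen (Basic : ∀ n : ℕ, ((Fin n → ℝ) → ℝ) → Prop) :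
    ∀ n : ℕ, Set (Fin n → ℝ) → Prop
  | of_isOpen {n : ℕ} (U : Set (Fin n → ℝ)) : IsOpen U → QuasiOpen Basic n U
  | zeroSet {n : ℕ} (h : (Fin n → ℝ) → ℝ) : Basic n h → QuasiOpen Basic n (h ⁻¹' {0})
  | iUnion {n : ℕ} (Q : ℕ → Set (Fin n → ℝ)) :
      (∀ i, QuasiOpen Basic n (Q i)) → QuasiOpen Basic n (⋃ i, Q i)
  | inter {n : ℕ} (Q₁ Q₂ : Set (Fin n → ℝ)) :
      QuasiOpen Basic n Q₁ → QuasiOpen Basic n Q₂ → QuasiOpen Basic n (Q₁ ∩ Q₂)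

/-- every quasiopen set is the union of an open set and a quasivariety. -/
theorem quasiopen_eq_open_union_quasivariety (Basic : ∀ n : ℕ, ((Fin n → ℝ) → ℝ) → Prop)
    (hadm : Admissible Basic) (n : ℕ) (Q : Set (Fin n → ℝ))
    (hQ : QuasiOpen Basic n Q) :
    ∃ (U Z : Set (Fin n → ℝ)), IsOpen U ∧ IsQuasivariety Basic n Z ∧ Q = U ∪ Z := by
  have qv_mono : ∀ {m : ℕ} {A B : Set (Fin m → ℝ)}, A ⊆ B → IsQuasivariety Basic m B →
      IsQuasivariety Basic m A := by
    rintro m A B hAB ⟨S, hS, hb, hsub⟩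
    exact ⟨S, hS, hb, hAB.trans hsub⟩
  have qv_empty : ∀ m : ℕ, IsQuasivariety Basic m (∅ : Set (Fin m → ℝ)) := by
    intro m
    exact ⟨∅, countable_empty, by simp, by simp⟩
  induction hQ with
  | of_isOpen U hU =>
      exact ⟨U, ∅, hU, qv_empty n, by simp⟩
  | zeroSet h hb =>
      by_cases hz : h = 0
      · refine ⟨h ⁻¹' {0}, ∅, ?_, qv_empty n, by simp⟩
        subst hz
        have : ((0 : (Fin n → ℝ) → ℝ)) ⁻¹' {0} = univ := by ext x; simp
        rw [this]; exact isOpen_univ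
      · refine ⟨∅, h ⁻¹' {0}, isOpen_empty, ⟨{h}, countable_singleton h, ?_, by simp⟩, by simp⟩
        rintro g hg
        rw [mem_singleton_iff] at hg
        subst hg
        exact ⟨hb, hz⟩
  | iUnion Q hQ ih =>
      choose U Z hU hZ hQUZ using ih
      refine ⟨⋃ i, U i, (⋃ i, Q i) \ ⋃ i, U i, isOpen_iUnion hU, ?_, ?_⟩
      · refine qv_mono ?_ ?_ (B := ⋃ i, Z i)
        · intro x hx
          obtain ⟨hx1, hx2⟩ := hx
          simp only [mem_iUnion] at hx1 hx2 ⊢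
          obtain ⟨i, hi⟩ := hx1
          rw [hQUZ i] at hi
          rcases hi with h | h
          · exact absurd ⟨i, h⟩ hx2
          · exact ⟨i, h⟩
        · choose S hSc hSb hSsub using hZ
          refine ⟨⋃ i, S i, countable_iUnion hSc, ?_, ?_⟩
          · intro g hg
            rw [mem_iUnion] at hg
            obtain ⟨i, hi⟩ := hg
            exact hSb i g hi
          · intro x hx
            rw [mem_iUnion] at hx
            obtain ⟨i, hi⟩ := hx
            have := hSsub i hi
            simp only [mem_iUnion] at this ⊢
            obtain ⟨g, hg, hx0⟩ := this
            exact ⟨g, ⟨i, hg⟩, hx0⟩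
      · rw [union_diff_self]
        apply (union_eq_self_of_subset_left ?_).symm
        exact iUnion_mono fun i => (hQUZ i) ▸ subset_union_left
  | inter Q₁ Q₂ h₁ h₂ ih₁ ih₂ =>
      obtain ⟨U₁, Z₁, hU₁, hZ₁, hQ₁⟩ := ih₁
      obtain ⟨U₂, Z₂, hU₂, hZ₂, hQ₂⟩ := ih₂
      refine ⟨U₁ ∩ U₂, (Q₁ ∩ Q₂) \ (U₁ ∩ U₂), hU₁.inter hU₂, ?_, ?_⟩
      · refine qv_mono ?_ ?_ (B := Z₁ ∪ Z₂)
        · rintro x ⟨⟨hx1, hx2⟩, hx3⟩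
          rw [hQ₁] at hx1; rw [hQ₂] at hx2
          rcases hx1 with h | h
          · rcases hx2 with h' | h'
            · exact absurd ⟨h, h'⟩ hx3
            · exact Or.inr h'
          · exact Or.inl h
        · obtain ⟨S₁, hc₁, hb₁, hs₁⟩ := hZ₁
          obtain ⟨S₂, hc₂, hb₂, hs₂⟩ := hZ₂
          refine ⟨S₁ ∪ S₂, hc₁.union hc₂, ?_, ?_⟩
          · rintro g (hg | hg)
            exacts [hb₁ g hg, hb₂ g hg]
          · rintro x (hx | hx)
            · obtain ⟨g, hg, hx0⟩ := by simpa using hs₁ hx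
              exact mem_iUnion₂.mpr ⟨g, Or.inl hg, hx0⟩
            · obtain ⟨g, hg, hx0⟩ := by simpa using hs₂ hx
              exact mem_iUnion₂.mpr ⟨g, Or.inr hg, hx0⟩
      · rw [union_diff_self]
        apply (union_eq_self_of_subset_left ?_).symm
        exact inter_subset_inter (hQ₁ ▸ subset_union_left) (hQ₂ ▸ subset_union_left)
end

section
/- If Q ⊆ ℝⁿ is quasiopen, then its border Q \ interior(Q) is a quasivariety; consequently Q = interior(Q) ∪ border(Q) is a decomposition into an open set and a quasivariety. -/
open MeasureTheory Set

lemma qv_mono {Basic : ∀ n : ℕ, ((Fin n → ℝ) → ℝ) → Prop} {n : ℕ}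
    {Z Z' : Set (Fin n → ℝ)} (h : IsQuasivariety Basic n Z) (hs : Z' ⊆ Z) :
    IsQuasivariety Basic n Z' := by
  obtain ⟨S, hc, hb, hsub⟩ := h
  exact ⟨S, hc, hb, hs.trans hsub⟩

lemma qv_empty {Basic : ∀ n : ℕ, ((Fin n → ℝ) → ℝ) → Prop} {n : ℕ} :
    IsQuasivariety Basic n (∅ : Set (Fin n → ℝ)) :=
  ⟨∅, countable_empty, by simp, by simp⟩

lemma qv_iUnion {Basic : ∀ n : ℕ, ((Fin n → ℝ) → ℝ) → Prop} {n : ℕ}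
    {Z : ℕ → Set (Fin n → ℝ)} (h : ∀ i, IsQuasivariety Basic n (Z i)) :
    IsQuasivariety Basic n (⋃ i, Z i) := by
  choose S hc hb hsub using h
  refine ⟨⋃ i, S i, countable_iUnion hc, ?_, ?_⟩
  · rintro f hf
    simp only [mem_iUnion] at hf
    obtain ⟨i, hi⟩ := hf
    exact hb i f hi
  · refine iUnion_subset fun i => (hsub i).trans ?_
    intro x hx
    simp only [mem_iUnion] at hx ⊢
    obtain ⟨g, hg, hx⟩ := hx
    exact ⟨g, ⟨i, hg⟩, hx⟩

lemma qv_union {Basic : ∀ n : ℕ, ((Fin n → ℝ) → ℝ) → Prop} {n : ℕ}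
    {Z₁ Z₂ : Set (Fin n → ℝ)} (h₁ : IsQuasivariety Basic n Z₁)
    (h₂ : IsQuasivariety Basic n Z₂) : IsQuasivariety Basic n (Z₁ ∪ Z₂) := by
  obtain ⟨S₁, hc₁, hb₁, hs₁⟩ := h₁
  obtain ⟨S₂, hc₂, hb₂, hs₂⟩ := h₂
  refine ⟨S₁ ∪ S₂, hc₁.union hc₂, ?_, ?_⟩
  · rintro f (hf | hf)
    exacts [hb₁ f hf, hb₂ f hf]
  · rintro x (hx | hx)
    · obtain ⟨g, hg, hxg⟩ := mem_iUnion₂.1 (hs₁ hx)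
      exact mem_iUnion₂.2 ⟨g, Or.inl hg, hxg⟩
    · obtain ⟨g, hg, hxg⟩ := mem_iUnion₂.1 (hs₂ hx)
      exact mem_iUnion₂.2 ⟨g, Or.inr hg, hxg⟩

lemma qv_border {Basic : ∀ n : ℕ, ((Fin n → ℝ) → ℝ) → Prop} {n : ℕ}
    {Q : Set (Fin n → ℝ)} (hQ : QuasiOpen Basic n Q) :
    IsQuasivariety Basic n (Q \ interior Q) := by
  induction hQ with
  | of_isOpen U hU =>
      rw [hU.interior_eq, diff_self]
      exact qv_empty
  | zeroSet h hb =>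
      by_cases hz : h = 0
      · subst hz
        have : ((0 : (Fin n → ℝ) → ℝ) ⁻¹' {0} : Set (Fin n → ℝ)) = univ := by
          ext x; simp
        rw [this, interior_univ, diff_self]
        exact qv_empty
      · exact ⟨{h}, countable_singleton h, by simpa using ⟨hb, hz⟩,
          fun x hx => mem_iUnion₂.2 ⟨h, rfl, hx.1⟩⟩
  | iUnion Q hq ih =>
      refine qv_mono (qv_iUnion ih) ?_
      rintro x ⟨hx, hnx⟩
      obtain ⟨i, hi⟩ := mem_iUnion.1 hx
      exact mem_iUnion.2 ⟨i, hi, fun h => hnx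
        (interior_mono (subset_iUnion Q i) h)⟩
  | inter Q₁ Q₂ h₁ h₂ ih₁ ih₂ =>
      refine qv_mono (qv_union ih₁ ih₂) ?_
      rintro x ⟨⟨hx₁, hx₂⟩, hnx⟩
      by_cases hi₁ : x ∈ interior Q₁
      · refine Or.inr ⟨hx₂, fun hi₂ => hnx ?_⟩
        rw [interior_inter]
        exact ⟨hi₁, hi₂⟩
      · exact Or.inl ⟨hx₁, hi₁⟩

/-- the border of a quasiopen set is a quasivariety, giving the
decomposition `Q = interior Q ∪ border Q`. -/
theorem quasiopen_border_quasivariety (Basic : ∀ n : ℕ, ((Fin n → ℝ) → ℝ) → Prop)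
    (hadm : Admissible Basic) (n : ℕ) (Q : Set (Fin n → ℝ))
    (hQ : QuasiOpen Basic n Q) :
    IsQuasivariety Basic n (Q \ interior Q) ∧ Q = interior Q ∪ (Q \ interior Q) := by
  exact ⟨qv_border hQ, (union_diff_cancel interior_subset).symm⟩
end

section
/- The derivative operator is not Scott continuous on the flat domain function space: there exists a directed chain (φₙ)_{n>0} of partial functions ℝ ⇀ ℝ, each differentiable on its domain of differentiability, such that ∂(sup_{n} φₙ) ≠ sup_{n} ∂φₙ, where sup is taken in the pointwise order on partial functions and ∂ takes a partial function to its derivative on its domain of differentiability. -/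
open Filter

def ple (F G : ℝ →. ℝ) : Prop := ∀ x ∈ F.Dom, F x = G x

noncomputable def pderiv' (F : ℝ →. ℝ) : ℝ →. ℝ := fun x =>
  ⟨∃ g : ℝ → ℝ, DifferentiableAt ℝ g x ∧ ∀ᶠ y in nhds x, F y = Part.some (g y),
   fun h => deriv h.choose x⟩

def phiAux (i : ℕ) : ℝ →. ℝ := fun x => ⟨x ≤ 0 ∨ 1/(i+1:ℝ) < x, fun _ => 0⟩

lemma phiAux_eq_some {i : ℕ} {x : ℝ} (h : x ≤ 0 ∨ 1/(i+1:ℝ) < x) :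
    phiAux i x = Part.some 0 :=
  Part.eq_some_iff.2 ⟨h, rfl⟩

lemma phiAux_ev {i : ℕ} {x : ℝ} (h : x < 0 ∨ 1/(i+1:ℝ) < x) :
    ∀ᶠ y in nhds x, phiAux i y = Part.some 0 := by
  rcases h with h | h
  · filter_upwards [eventually_lt_nhds h] with y hy
    exact phiAux_eq_some (Or.inl hy.le)
  · filter_upwards [eventually_gt_nhds h] with y hy
    exact phiAux_eq_some (Or.inr hy)

lemma pderiv_phiAux_dom {i : ℕ} {x : ℝ} (h : (pderiv' (phiAux i) x).Dom) :
    x < 0 ∨ 1/(i+1:ℝ) < x := by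
  obtain ⟨g, hg, hev⟩ := h
  have hx : x ≤ 0 ∨ 1/(i+1:ℝ) < x := by
    obtain ⟨hd, -⟩ := Part.eq_some_iff.1 hev.self_of_nhds
    exact hd
  have hpos : (0:ℝ) < 1/(i+1:ℝ) := by positivity
  have hxne : x ≠ 0 := by
    intro hx0
    subst hx0
    rw [Metric.eventually_nhds_iff] at hev
    obtain ⟨ε, hε, hball⟩ := hev
    set y := min ε (1/(i+1:ℝ)) / 2 with hy
    have hy0 : 0 < y := by positivity
    have hyε : y < ε := by
      calc y ≤ ε / 2 := by apply div_le_div_of_nonneg_right (min_le_left _ _); norm_num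
      _ < ε := by linarith
    have hyi : y < 1/(i+1:ℝ) := by
      calc y ≤ (1/(i+1:ℝ)) / 2 := by
              apply div_le_div_of_nonneg_right (min_le_right _ _); norm_num
      _ < 1/(i+1:ℝ) := by linarith
    have hdy : dist y 0 < ε := by
      rw [Real.dist_eq, sub_zero, abs_of_pos hy0]; exact hyε
    obtain ⟨hd, -⟩ := Part.eq_some_iff.1 (hball hdy)
    rcases hd with h1 | h1
    · linarith
    · linarith
  rcases hx with h1 | h1
  · exact Or.inl (lt_of_le_of_ne h1 hxne)
  · exact Or.inr h1

lemma pderiv_phiAux {i : ℕ} {x : ℝ} (h : x < 0 ∨ 1/(i+1:ℝ) < x) :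
    pderiv' (phiAux i) x = Part.some 0 := by
  have hev := phiAux_ev h
  have hdom : (pderiv' (phiAux i) x).Dom :=
    ⟨fun _ => 0, differentiableAt_const 0, by simpa using hev⟩
  refine Part.eq_some_iff.2 ⟨hdom, ?_⟩
  show deriv hdom.choose x = 0
  have hspec := hdom.choose_spec
  have heq : hdom.choose =ᶠ[nhds x] fun _ => (0:ℝ) := by
    filter_upwards [hspec.2, hev] with y h1 h2
    exact Part.some_inj.1 (h1.symm.trans h2)
  rw [heq.deriv_eq, deriv_const]

lemma pderiv_total_zero (x : ℝ) :
    pderiv' (fun _ => Part.some (0:ℝ)) x = Part.some 0 := by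
  have hev : ∀ᶠ y in nhds x, (fun _ => Part.some (0:ℝ)) y = Part.some ((fun _ => (0:ℝ)) y) :=
    Eventually.of_forall (fun _ => rfl)
  have hdom : (pderiv' (fun _ => Part.some (0:ℝ)) x).Dom :=
    ⟨fun _ => 0, differentiableAt_const 0, hev⟩
  refine Part.eq_some_iff.2 ⟨hdom, ?_⟩
  show deriv hdom.choose x = 0
  have hspec := hdom.choose_spec
  have heq : hdom.choose =ᶠ[nhds x] fun _ => (0:ℝ) := by
    filter_upwards [hspec.2] with y h1
    exact (Part.some_inj.1 h1).symm
  rw [heq.deriv_eq, deriv_const]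

/-- the derivative operator is not Scott continuous: there is an
increasing chain `φ` of partial functions with least upper bound `Φ`, such that the
least upper bound `Ψ` of the derivatives `pderiv' (φ i)` differs from `pderiv' Φ`. -/
theorem deriv_not_scott_continuous :
    ∃ (φ : ℕ → (ℝ →. ℝ)) (Φ Ψ : ℝ →. ℝ),
      (∀ i, ple (φ i) (φ (i + 1))) ∧
      (∀ i, ple (φ i) Φ) ∧ (∀ G, (∀ i, ple (φ i) G) → ple Φ G) ∧
      (∀ i, ple (pderiv' (φ i)) Ψ) ∧
      (∀ G, (∀ i, ple (pderiv' (φ i)) G) → ple Ψ G) ∧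
      pderiv' Φ ≠ Ψ := by
  refine ⟨phiAux, fun _ => Part.some 0, fun x => ⟨x ≠ 0, fun _ => 0⟩,
    ?_, ?_, ?_, ?_, ?_, ?_⟩
  · -- chain
    intro i x hx
    have hx' : x ≤ 0 ∨ 1/((i:ℝ)+1) < x := hx
    have hlt : 1/((i:ℝ)+1+1) < 1/((i:ℝ)+1) := by
      apply one_div_lt_one_div_of_lt
      · positivity
      · linarith
    rw [phiAux_eq_some hx', phiAux_eq_some]
    rcases hx' with h | h
    · exact Or.inl h
    · refine Or.inr ?_
      show (1:ℝ)/(((i+1:ℕ):ℝ)+1) < x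
      push_cast at hlt ⊢
      linarith
  · -- ≤ Φ
    intro i x hx
    exact phiAux_eq_some hx
  · -- Φ lub
    intro G hG x _
    rcases le_or_gt x 0 with h | h
    · have := hG 0 x (Or.inl h)
      rw [phiAux_eq_some (Or.inl h)] at this
      exact this
    · obtain ⟨n, hn⟩ := exists_nat_one_div_lt h
      have hd : x ≤ 0 ∨ 1/((n:ℝ)+1) < x := Or.inr (by push_cast at hn ⊢; linarith)
      have := hG n x hd
      rw [phiAux_eq_some hd] at this
      exact this
  · -- pderiv' φ i ≤ Ψ
    intro i x hx
    have h := pderiv_phiAux_dom hx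
    have hne : x ≠ 0 := by rcases h with h | h; · exact ne_of_lt h
                           · have : (0:ℝ) < 1/((i:ℝ)+1) := by positivity
                             exact ne_of_gt (lt_trans this h)
    rw [pderiv_phiAux h]
    exact Eq.symm (Part.eq_some_iff.2 ⟨hne, rfl⟩)
  · -- Ψ lub
    intro G hG x hx
    have hne : x ≠ 0 := hx
    have : ∃ i : ℕ, x < 0 ∨ 1/((i:ℝ)+1) < x := by
      rcases lt_or_gt_of_ne hne with h | h
      · exact ⟨0, Or.inl h⟩
      · obtain ⟨n, hn⟩ := exists_nat_one_div_lt h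
        exact ⟨n, Or.inr (by push_cast at hn ⊢; linarith)⟩
    obtain ⟨i, hi⟩ := this
    have hdom : (pderiv' (phiAux i) x).Dom := by
      rw [pderiv_phiAux hi]; trivial
    have := hG i x hdom
    rw [pderiv_phiAux hi] at this
    rw [← this]
    exact Part.eq_some_iff.2 ⟨hne, rfl⟩
  · -- ≠
    intro hcontra
    have h0 := congrFun hcontra 0
    rw [pderiv_total_zero 0] at h0
    have : ((0:ℝ) ≠ 0) := by
      have hd : (Part.some (0:ℝ)).Dom := trivial
      rw [h0] at hd
      exact hd
    exact this rfl
end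

section
/- Conditional combination preserves complete quasicontinuity: let P : ℝⁿ ⇀ ℝ, f, g : ℝⁿ ⇀ ℝᵐ be completely quasicontinuous, and define h : ℝⁿ ⇀ ℝᵐ by h(x) = f(x) if P(x) ≤ 0, h(x) = g(x) if P(x) > 0, and h(x) undefined if P(x) is undefined (h(x) is also undefined when the selected branch is undefined). Then h is completely quasicontinuous. -/
open MeasureTheory Set

/-- Left component of a splitting ℝ^{l+n} ≅ ℝˡ × ℝⁿ. -/
def splitL {l n : ℕ} (x : Fin (l + n) → ℝ) : Fin l → ℝ := fun i => x (Fin.castAdd n i)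

/-- Right component of a splitting ℝ^{l+n} ≅ ℝˡ × ℝⁿ. -/
def splitR {l n : ℕ} (x : Fin (l + n) → ℝ) : Fin n → ℝ := fun j => x (Fin.natAdd l j)

/-- The partial function `id_{ℝˡ} × f : ℝ^{l+n} ⇀ ℝ^{l+m}`. -/
def idProd (l : ℕ) {n m : ℕ} (f : (Fin n → ℝ) →. (Fin m → ℝ)) :
    (Fin (l + n) → ℝ) →. (Fin (l + m) → ℝ) :=
  fun x => (f (splitR x)).map (fun y => Fin.append (splitL x) y)

/-- A partial function is quasicontinuous if preimages of quasiopen sets are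
quasiopen.  (The preimage of a partial function consists of the points where it is
defined with value in the given set.) -/
def QuasiCont (Basic : ∀ n : ℕ, ((Fin n → ℝ) → ℝ) → Prop) {n m : ℕ}
    (f : (Fin n → ℝ) →. (Fin m → ℝ)) : Prop :=
  ∀ Q : Set (Fin m → ℝ), QuasiOpen Basic m Q → QuasiOpen Basic n (f.preimage Q)

/-- A partial function is completely quasicontinuous (cqc) if `id_{ℝˡ} × f` is
quasicontinuous for every `l` (including `l = 0`, i.e. `f` itself). -/
def CQC (Basic : ∀ n : ℕ, ((Fin n → ℝ) → ℝ) → Prop) {n m : ℕ}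
    (f : (Fin n → ℝ) →. (Fin m → ℝ)) : Prop :=
  QuasiCont Basic f ∧ ∀ l : ℕ, QuasiCont Basic (idProd l f)


lemma quasiOpen_union (Basic : ∀ n : ℕ, ((Fin n → ℝ) → ℝ) → Prop) {k : ℕ}
    {A B : Set (Fin k → ℝ)} (hA : QuasiOpen Basic k A) (hB : QuasiOpen Basic k B) :
    QuasiOpen Basic k (A ∪ B) := by
  have h : A ∪ B = ⋃ i : ℕ, (if i = 0 then A else B) := by
    ext x
    simp only [Set.mem_iUnion, Set.mem_union]
    constructor
    · rintro (h | h)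
      · exact ⟨0, by simpa⟩
      · exact ⟨1, by simpa⟩
    · rintro ⟨i, hi⟩
      by_cases h : i = 0
      · left; simpa [h] using hi
      · right; simpa [h] using hi
  rw [h]
  exact QuasiOpen.iUnion _ (fun i => by
    by_cases h : i = 0 <;> simp only [h, if_true, if_false] <;> first | exact hA | exact hB)

lemma quasiOpen_le (Basic : ∀ n : ℕ, ((Fin n → ℝ) → ℝ) → Prop)
    (hproj : ∀ (k : ℕ) (i : Fin k), Basic k (fun x => x i)) {k : ℕ} (i : Fin k) :
    QuasiOpen Basic k {z | z i ≤ 0} := by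
  have h1 : QuasiOpen Basic k {z | z i < 0} :=
    QuasiOpen.of_isOpen _ (isOpen_lt (continuous_apply i) continuous_const)
  have h2 : QuasiOpen Basic k ((fun z : Fin k → ℝ => z i) ⁻¹' {0}) :=
    QuasiOpen.zeroSet _ (hproj k i)
  have h3 : {z : Fin k → ℝ | z i ≤ 0} = {z | z i < 0} ∪ ((fun z : Fin k → ℝ => z i) ⁻¹' {0}) := by
    ext z
    simp only [Set.mem_setOf_eq, Set.mem_union, Set.mem_preimage, Set.mem_singleton_iff]
    exact le_iff_lt_or_eq
  rw [h3]
  exact quasiOpen_union _ h1 h2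

lemma quasiOpen_not_le (Basic : ∀ n : ℕ, ((Fin n → ℝ) → ℝ) → Prop) {k : ℕ} (i : Fin k) :
    QuasiOpen Basic k {z | ¬ z i ≤ 0} := by
  have h : {z : Fin k → ℝ | ¬ z i ≤ 0} = {z | 0 < z i} := by
    ext z; simp only [Set.mem_setOf_eq, not_le]
  rw [h]
  exact QuasiOpen.of_isOpen _ (isOpen_lt continuous_const (continuous_apply i))

lemma qc_ite_aux (Basic : ∀ n : ℕ, ((Fin n → ℝ) → ℝ) → Prop) {k j m : ℕ}
    (p : (Fin k → ℝ) →. (Fin j → ℝ)) (f g : (Fin k → ℝ) →. (Fin m → ℝ))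
    (c : (Fin j → ℝ) → Prop) [DecidablePred c]
    (hA : QuasiOpen Basic j {v | c v}) (hB : QuasiOpen Basic j {v | ¬ c v})
    (hp : QuasiCont Basic p) (hfq : QuasiCont Basic f) (hgq : QuasiCont Basic g) :
    QuasiCont Basic (fun x => (p x).bind fun v => if c v then f x else g x) := by
  intro Q hQ
  have heq : (PFun.preimage (fun x => (p x).bind fun v => if c v then f x else g x) Q)
      = (p.preimage {v | c v} ∩ f.preimage Q) ∪ (p.preimage {v | ¬ c v} ∩ g.preimage Q) := by
    ext x
    change (∃ y ∈ Q, y ∈ (p x).bind fun v => if c v then f x else g x) ↔ _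
    simp only [PFun.mem_preimage, Set.mem_union, Set.mem_inter_iff, Part.mem_bind_iff,
      Set.mem_setOf_eq]
    constructor
    · rintro ⟨y, hyQ, v, hv, hy⟩
      by_cases hc : c v
      · rw [if_pos hc] at hy
        exact Or.inl ⟨⟨v, hc, hv⟩, ⟨y, hyQ, hy⟩⟩
      · rw [if_neg hc] at hy
        exact Or.inr ⟨⟨v, hc, hv⟩, ⟨y, hyQ, hy⟩⟩
    · rintro (⟨⟨v, hc, hv⟩, ⟨y, hyQ, hy⟩⟩ | ⟨⟨v, hc, hv⟩, ⟨y, hyQ, hy⟩⟩)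
      · exact ⟨y, hyQ, v, hv, by rwa [if_pos hc]⟩
      · exact ⟨y, hyQ, v, hv, by rwa [if_neg hc]⟩
  rw [heq]
  exact quasiOpen_union _ (QuasiOpen.inter _ _ (hp _ hA) (hfq _ hQ))
    (QuasiOpen.inter _ _ (hp _ hB) (hgq _ hQ))

/-- conditional combination preserves complete quasicontinuity.
With `P : ℝⁿ ⇀ ℝ` (ℝ ≅ Fin 1 → ℝ) and `f, g : ℝⁿ ⇀ ℝᵐ` all cqc, the partial
function `h` with `h x = f x` if `P x ≤ 0`, `h x = g x` if `P x > 0`, and undefined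
when `P x` (or the selected branch) is undefined, is cqc.  The admissible clone is
assumed to contain all projections. -/
theorem cqc_ite (Basic : ∀ n : ℕ, ((Fin n → ℝ) → ℝ) → Prop)
    (hadm : Admissible Basic)
    (hproj : ∀ (k : ℕ) (i : Fin k), Basic k (fun x => x i)) (n m : ℕ)
    (P : (Fin n → ℝ) →. (Fin 1 → ℝ)) (f g : (Fin n → ℝ) →. (Fin m → ℝ))
    (hP : CQC Basic P) (hf : CQC Basic f) (hg : CQC Basic g) :
    CQC Basic (fun x => (P x).bind (fun v => if v 0 ≤ 0 then f x else g x)) := by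
  constructor
  · exact qc_ite_aux Basic P f g (fun v => v 0 ≤ 0) (quasiOpen_le Basic hproj 0)
      (quasiOpen_not_le Basic 0) hP.1 hf.1 hg.1
  · intro l
    have heq : idProd l (fun x => (P x).bind (fun v => if v 0 ≤ 0 then f x else g x))
        = fun x => (idProd l P x).bind
            (fun w => if w (Fin.natAdd l 0) ≤ 0 then idProd l f x else idProd l g x) := by
      funext x
      apply Part.ext
      intro y
      simp only [idProd, Part.mem_map_iff, Part.mem_bind_iff]
      constructor
      · rintro ⟨z, ⟨v, hv, hz⟩, rfl⟩
        refine ⟨Fin.append (splitL x) v, ⟨v, hv, rfl⟩, ?_⟩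
        rw [Fin.append_right]
        by_cases hc : v 0 ≤ 0
        · rw [if_pos hc] at hz ⊢
          exact (Part.mem_map_iff _).mpr ⟨z, hz, rfl⟩
        · rw [if_neg hc] at hz ⊢
          exact (Part.mem_map_iff _).mpr ⟨z, hz, rfl⟩
      · rintro ⟨w, ⟨v, hv, rfl⟩, hy⟩
        rw [Fin.append_right] at hy
        by_cases hc : v 0 ≤ 0
        · rw [if_pos hc] at hy
          obtain ⟨z, hz, rfl⟩ := (Part.mem_map_iff _).mp hy
          exact ⟨z, ⟨v, hv, by rw [if_pos hc]; exact hz⟩, rfl⟩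
        · rw [if_neg hc] at hy
          obtain ⟨z, hz, rfl⟩ := (Part.mem_map_iff _).mp hy
          exact ⟨z, ⟨v, hv, by rw [if_neg hc]; exact hz⟩, rfl⟩
    rw [heq]
    exact qc_ite_aux Basic (idProd l P) (idProd l f) (idProd l g)
      (fun w => w (Fin.natAdd l 0) ≤ 0) (quasiOpen_le Basic hproj _)
      (quasiOpen_not_le Basic _) (hP.2 l) (hf.2 l) (hg.2 l)
end
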